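/- Fix k ≥ 1 and let D_{n,k} = k(2n−k). Then lim_{n→∞} [ (2√π)^k · Γ(D_{n,k}/2 + 1) / ∏_{i=n−k+1}^{n} Γ(i) ]^{1/D_{n,k}} = √k. Equivalently, (vol V_{k,n}/|B^{D_{n,k}}|)^{1/D_{n,k}} → √k as n → ∞. -/

import Mathlib

open Real Finset Filter

def Dnk (k n : ℕ) : ℕ := k * (2 * n - k)
def mnk (k n : ℕ) : ℕ := Dnk k n / 2

lemma Dnk_cast {k n : ℕ} (hn : k ≤ n) : ((Dnk k n : ℕ) : ℝ) = k * (2 * n - k) := by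
  unfold Dnk
  push_cast [Nat.cast_sub (le_trans hn (by omega) : k ≤ 2 * n)]
  ring

lemma mnk_bounds (k n : ℕ) : 2 * mnk k n ≤ Dnk k n ∧ Dnk k n < 2 * mnk k n + 2 := by
  unfold mnk; omega

lemma tendsto_Dnk_nat {k : ℕ} (hk : 1 ≤ k) : Tendsto (Dnk k) atTop atTop := by
  apply tendsto_atTop_mono' atTop (Eventually.mono (eventually_ge_atTop k) ?_) tendsto_id
  intro n hn
  calc (n : ℕ) = 1 * n := (one_mul n).symm
  _ ≤ k * (2 * n - k) := Nat.mul_le_mul hk (by omega)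

lemma tendsto_Dnk {k : ℕ} (hk : 1 ≤ k) : Tendsto (fun n => ((Dnk k n : ℕ) : ℝ)) atTop atTop :=
  tendsto_natCast_atTop_atTop.comp (tendsto_Dnk_nat hk)

lemma tendsto_mnk_nat {k : ℕ} (hk : 1 ≤ k) : Tendsto (mnk k) atTop atTop := by
  apply tendsto_atTop_mono' atTop (Eventually.mono (eventually_ge_atTop k) ?_)
    (tendsto_sub_atTop_nat k)
  intro n hn
  have h1 : 2 * (n - k) ≤ Dnk k n := by
    unfold Dnk
    calc 2 * (n - k) ≤ 1 * (2 * n - k) := by omega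
    _ ≤ k * (2 * n - k) := Nat.mul_le_mul hk le_rfl
  have := Nat.div_le_div_right (c := 2) h1
  simpa [Nat.mul_div_cancel_left, mnk] using this

lemma tendsto_mnk {k : ℕ} (hk : 1 ≤ k) : Tendsto (fun n => ((mnk k n : ℕ) : ℝ)) atTop atTop :=
  tendsto_natCast_atTop_atTop.comp (tendsto_mnk_nat hk)

lemma Dnk_pos {k n : ℕ} (hk : 1 ≤ k) (hn : k + 1 ≤ n) : 0 < Dnk k n := by
  unfold Dnk; exact Nat.mul_pos hk (by omega)

lemma Dnk_cast_pos {k n : ℕ} (hk : 1 ≤ k) (hn : k + 1 ≤ n) : (0:ℝ) < ((Dnk k n : ℕ) : ℝ) := by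
  exact_mod_cast Dnk_pos hk hn

lemma mnk_cast_bounds (k n : ℕ) :
    2 * ((mnk k n : ℕ) : ℝ) ≤ ((Dnk k n : ℕ) : ℝ) ∧ ((Dnk k n : ℕ) : ℝ) ≤ 2 * ((mnk k n : ℕ) : ℝ) + 1 := by
  constructor
  · exact_mod_cast (mnk_bounds k n).1
  · have h := (mnk_bounds k n).2
    have h2 : Dnk k n ≤ 2 * mnk k n + 1 := by omega
    exact_mod_cast h2

lemma hmD {k : ℕ} (hk : 1 ≤ k) :
    Tendsto (fun n => ((mnk k n : ℕ) : ℝ) / ((Dnk k n : ℕ) : ℝ)) atTop (nhds (1/2)) := by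
  have hlow : Tendsto (fun n : ℕ => 1/2 - 1 / ((Dnk k n : ℕ) : ℝ)) atTop (nhds (1/2)) := by
    have := (tendsto_Dnk hk).inv_tendsto_atTop
    simpa [one_div] using tendsto_const_nhds.sub this
  apply tendsto_of_tendsto_of_tendsto_of_le_of_le' hlow tendsto_const_nhds
  · filter_upwards [eventually_ge_atTop (k+1)] with n hn
    have hD := Dnk_cast_pos hk hn
    have h2 := (mnk_cast_bounds k n).2
    rw [sub_le_iff_le_add, ← add_div, le_div_iff₀ hD]
    linarith
  · filter_upwards [eventually_ge_atTop (k+1)] with n hn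
    have hD := Dnk_cast_pos hk hn
    have h1 := (mnk_cast_bounds k n).1
    rw [div_le_div_iff₀ hD (by norm_num : (0:ℝ) < 2)]
    linarith

lemma hnD {k : ℕ} (hk : 1 ≤ k) :
    Tendsto (fun n : ℕ => (n : ℝ) / ((Dnk k n : ℕ) : ℝ)) atTop (nhds (1/(2*(k:ℝ)))) := by
  have h0 : Tendsto (fun n : ℕ => (k:ℝ)^2 / (n:ℝ)) atTop (nhds 0) := by
    simpa [div_eq_mul_inv] using tendsto_one_div_atTop_nhds_zero_nat.const_mul ((k:ℝ)^2)
  have hden : Tendsto (fun n : ℕ => 2*(k:ℝ) - (k:ℝ)^2 / (n:ℝ)) atTop (nhds (2*(k:ℝ))) := by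
    simpa using tendsto_const_nhds.sub h0
  have hk0 : (2*(k:ℝ)) ≠ 0 := by positivity
  have h := hden.inv₀ hk0
  rw [← one_div] at h
  apply h.congr'
  filter_upwards [eventually_ge_atTop (k+1)] with n hn
  have hD := Dnk_cast_pos hk hn
  have hn0 : (0:ℝ) < (n:ℝ) := by exact_mod_cast by omega
  rw [Dnk_cast (by omega)] at hD ⊢
  have heq : 2*(k:ℝ) - (k:ℝ)^2/(n:ℝ) = ((k:ℝ)*(2*(n:ℝ)-(k:ℝ)))/(n:ℝ) := by
    field_simp
  have hden0 : (0:ℝ) < 2*(k:ℝ) - (k:ℝ)^2/(n:ℝ) := by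
    rw [heq]; exact div_pos hD hn0
  rw [inv_eq_one_div, heq, one_div_div]

lemma hmn {k : ℕ} (hk : 1 ≤ k) :
    Tendsto (fun n => ((mnk k n : ℕ) : ℝ) / (n:ℝ)) atTop (nhds (k:ℝ)) := by
  have hlow : Tendsto (fun n : ℕ => (k:ℝ) - ((k:ℝ)^2+1) / (n:ℝ)) atTop (nhds (k:ℝ)) := by
    have h0 : Tendsto (fun n : ℕ => ((k:ℝ)^2+1) / (n:ℝ)) atTop (nhds 0) := by
      have := tendsto_one_div_atTop_nhds_zero_nat.const_mul ((k:ℝ)^2+1)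
      rw [mul_zero] at this
      exact this.congr fun n => mul_one_div _ _
    simpa using tendsto_const_nhds.sub h0
  apply tendsto_of_tendsto_of_tendsto_of_le_of_le' hlow tendsto_const_nhds
  · filter_upwards [eventually_ge_atTop (k+1)] with n hn
    have hn0 : (0:ℝ) < (n:ℝ) := by exact_mod_cast by omega
    have h2 := (mnk_cast_bounds k n).2
    rw [Dnk_cast (by omega : k ≤ n)] at h2
    rw [sub_le_iff_le_add, ← add_div, le_div_iff₀ hn0]
    have hkn : (k:ℝ) ≤ (n:ℝ) := by exact_mod_cast by omega
    nlinarith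
  · filter_upwards [eventually_ge_atTop (k+1)] with n hn
    have hn0 : (0:ℝ) < (n:ℝ) := by exact_mod_cast by omega
    have h1 := (mnk_cast_bounds k n).1
    rw [Dnk_cast (by omega : k ≤ n)] at h1
    rw [div_le_iff₀ hn0]
    have hk0 : (0:ℝ) ≤ (k:ℝ) := by positivity
    nlinarith

lemma SF {j : ℕ} (hj : 1 ≤ j) :
    Real.log (Nat.factorial j) = j * Real.log j - j + (1/2) * Real.log (2*j)
      + Real.log (Stirling.stirlingSeq j) := by
  have h := Stirling.log_stirlingSeq_formula j
  have hj0 : (0:ℝ) < (j:ℝ) := by exact_mod_cast hj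
  rw [Real.log_div hj0.ne' (Real.exp_ne_zero 1), Real.log_exp] at h
  have : (j:ℝ) * (Real.log j - 1) = j * Real.log j - j := by ring
  rw [this] at h
  linarith

lemma log_div_self_tendsto : Tendsto (fun x : ℝ => Real.log x / x) atTop (nhds 0) := by
  simpa using Real.isLittleO_log_id_atTop.tendsto_div_nhds_zero

lemma qdiv : Tendsto (fun j : ℕ =>
    (Real.log (Stirling.stirlingSeq j) + (1/2) * Real.log (2*j)) / j) atTop (nhds 0) := by
  have part1 : Tendsto (fun j : ℕ => Real.log (Stirling.stirlingSeq j) / j) atTop (nhds 0) := by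
    exact (Filter.Tendsto.log Stirling.tendsto_stirlingSeq_sqrt_pi
      (Real.sqrt_pos.2 Real.pi_pos).ne').div_atTop tendsto_natCast_atTop_atTop
  have h2j : Tendsto (fun j : ℕ => 2*(j:ℝ)) atTop atTop :=
    Tendsto.const_mul_atTop (by norm_num) tendsto_natCast_atTop_atTop
  have part2 : Tendsto (fun j : ℕ => (1/2) * Real.log (2*j) / j) atTop (nhds 0) := by
    have h := log_div_self_tendsto.comp h2j
    apply h.congr'
    filter_upwards [eventually_ge_atTop 1] with j hj
    have hj0 : (j:ℝ) ≠ 0 := by positivity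
    simp only [Function.comp]
    field_simp
  have := part1.add part2
  rw [add_zero] at this
  exact this.congr fun j => (add_div _ _ _).symm

lemma hb_nat (k j : ℕ) : Tendsto (fun n => n - k + j) atTop atTop :=
  tendsto_atTop_mono (fun n => Nat.le_add_right _ _) (tendsto_sub_atTop_nat k)

lemma hbn (k j : ℕ) :
    Tendsto (fun n : ℕ => ((n - k + j : ℕ) : ℝ) / (n:ℝ)) atTop (nhds 1) := by
  have h : Tendsto (fun n : ℕ => 1 - ((k:ℝ) - j) / (n:ℝ)) atTop (nhds 1) := by
    have h0 : Tendsto (fun n : ℕ => ((k:ℝ) - j) / (n:ℝ)) atTop (nhds 0) := by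
      simpa [div_eq_mul_inv] using tendsto_one_div_atTop_nhds_zero_nat.const_mul ((k:ℝ) - j)
    simpa using tendsto_const_nhds.sub h0
  apply h.congr'
  filter_upwards [eventually_ge_atTop (k+1)] with n hn
  have hn0 : (n:ℝ) ≠ 0 := by
    have : (0:ℝ) < n := by exact_mod_cast (by omega : 0 < n)
    exact this.ne'
  have hc : ((n - k + j : ℕ) : ℝ) = (n:ℝ) - k + j := by
    push_cast [Nat.cast_sub (by omega : k ≤ n)]; ring
  rw [hc]
  field_simp
  ring

lemma hbD {k : ℕ} (hk : 1 ≤ k) (j : ℕ) :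
    Tendsto (fun n : ℕ => ((n - k + j : ℕ) : ℝ) / ((Dnk k n : ℕ) : ℝ)) atTop
      (nhds (1/(2*(k:ℝ)))) := by
  have h := (hbn k j).mul (hnD hk)
  rw [one_mul] at h
  apply h.congr'
  filter_upwards [eventually_ge_atTop (k+1)] with n hn
  have hn0 : (n:ℝ) ≠ 0 := by
    have : (0:ℝ) < n := by exact_mod_cast (by omega : 0 < n)
    exact this.ne'
  have hD0 : ((Dnk k n : ℕ) : ℝ) ≠ 0 := (Dnk_cast_pos hk hn).ne'
  field_simp
lemma hlog1D {k : ℕ} (hk : 1 ≤ k) :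
    Tendsto (fun n : ℕ => (Real.log n - 1) / ((Dnk k n : ℕ) : ℝ)) atTop (nhds 0) := by
  have h1 : Tendsto (fun n : ℕ => Real.log n / ((Dnk k n : ℕ) : ℝ)) atTop (nhds 0) := by
    have h := (log_div_self_tendsto.comp tendsto_natCast_atTop_atTop).mul (hnD hk)
    rw [zero_mul] at h
    apply h.congr'
    filter_upwards [eventually_ge_atTop (k+1)] with n hn
    have hn0 : (n:ℝ) ≠ 0 := by
      have : (0:ℝ) < n := by exact_mod_cast (by omega : 0 < n)
      exact this.ne'
    have hD0 : ((Dnk k n : ℕ) : ℝ) ≠ 0 := (Dnk_cast_pos hk hn).ne'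
    simp only [Function.comp]
    field_simp
  have h2 : Tendsto (fun n : ℕ => 1 / ((Dnk k n : ℕ) : ℝ)) atTop (nhds 0) := by
    simpa [one_div, Pi.inv_def, Function.comp_def] using (tendsto_natCast_atTop_atTop.comp (by
      apply tendsto_atTop_mono' atTop (Eventually.mono (eventually_ge_atTop k) ?_) tendsto_id
      intro n hn
      show n ≤ Dnk k n
      unfold Dnk
      calc (n:ℕ) = 1 * n := (one_mul n).symm
      _ ≤ k * (2 * n - k) := Nat.mul_le_mul hk (by omega)) : Tendsto (fun n : ℕ => ((Dnk k n : ℕ):ℝ)) atTop atTop).inv_tendsto_atTop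
  have := h1.sub h2
  rw [sub_zero] at this
  exact this.congr fun n => (sub_div _ _ _).symm

lemma Dnk_ge {k n : ℕ} (hk : 1 ≤ k) (hn : k ≤ n) : n ≤ Dnk k n := by
  unfold Dnk
  calc (n:ℕ) = 1 * n := (one_mul n).symm
  _ ≤ k * (2 * n - k) := Nat.mul_le_mul hk (by omega)

lemma core {k : ℕ} (hk : 1 ≤ k) :
    Tendsto (fun n : ℕ =>
      ((k:ℝ) * Real.log (2 * Real.sqrt π) + Real.log (Nat.factorial (mnk k n))
        - ∑ j ∈ Finset.range k, Real.log (Nat.factorial (n - k + j))) / ((Dnk k n : ℕ):ℝ))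
      atTop (nhds (Real.log k / 2)) := by
  have hk0 : ((k:ℝ)) ≠ 0 := by positivity
  have hqb : ∀ (q b Dr : ℝ), b ≠ 0 → q/b*(b/Dr) = q/Dr := fun q b Dr hb => by
    rw [div_mul_div_comm, mul_comm q b, mul_div_mul_left _ _ hb]
  -- small tendsto pieces
  have t1 : Tendsto (fun n : ℕ => ((k:ℝ) * Real.log (2 * Real.sqrt π)) / ((Dnk k n : ℕ):ℝ))
      atTop (nhds 0) := tendsto_const_nhds.div_atTop (tendsto_Dnk hk)
  have t2 : Tendsto (fun n : ℕ =>
      ((Real.log (Stirling.stirlingSeq (mnk k n)) + (1/2) * Real.log (2*((mnk k n : ℕ):ℝ)))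
        / ((mnk k n : ℕ):ℝ)) * (((mnk k n : ℕ):ℝ) / ((Dnk k n : ℕ):ℝ)))
      atTop (nhds 0) := by
    have := (qdiv.comp (tendsto_mnk_nat hk)).mul (hmD hk)
    simpa [Function.comp] using this
  have t3 : Tendsto (fun n : ℕ =>
      (((mnk k n : ℕ):ℝ) / ((Dnk k n : ℕ):ℝ)) * Real.log (((mnk k n : ℕ):ℝ) / (n:ℝ)))
      atTop (nhds (1/2 * Real.log k)) :=
    (hmD hk).mul ((hmn hk).log hk0)
  have t4 : Tendsto (fun n : ℕ =>
      ∑ j ∈ Finset.range k,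
        ((Real.log (Stirling.stirlingSeq (n - k + j)) + (1/2) * Real.log (2*((n - k + j : ℕ):ℝ)))
          / ((n - k + j : ℕ):ℝ)) * (((n - k + j : ℕ):ℝ) / ((Dnk k n : ℕ):ℝ)))
      atTop (nhds 0) := by
    have h := tendsto_finset_sum (Finset.range k) (fun j _ => by
      have := (qdiv.comp (hb_nat k j)).mul (hbD hk j)
      exact this)
    simpa [Function.comp] using h
  have t5 : Tendsto (fun n : ℕ =>
      ∑ j ∈ Finset.range k,
        (((n - k + j : ℕ):ℝ) / ((Dnk k n : ℕ):ℝ)) * Real.log (((n - k + j : ℕ):ℝ) / (n:ℝ)))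
      atTop (nhds 0) := by
    have h := tendsto_finset_sum (Finset.range k) (fun j _ =>
      (hbD hk j).mul ((hbn k j).log one_ne_zero))
    simpa using h
  have t6 : Tendsto (fun n : ℕ =>
      (((mnk k n : ℕ):ℝ) - ∑ j ∈ Finset.range k, ((n - k + j : ℕ):ℝ))
        * ((Real.log n - 1) / ((Dnk k n : ℕ):ℝ)))
      atTop (nhds 0) := by
    apply squeeze_zero_norm' (a := fun n : ℕ => ((k:ℝ)+2) * |(Real.log n - 1) / ((Dnk k n : ℕ):ℝ)|)
    · filter_upwards [eventually_ge_atTop (k+1)] with n hn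
      have hkn : (k:ℝ) ≤ (n:ℝ) := by exact_mod_cast (by omega : k ≤ n)
      have hsum : ∑ j ∈ Finset.range k, ((n - k + j : ℕ):ℝ)
          = k * ((n:ℝ) - k) + ∑ j ∈ Finset.range k, (j:ℝ) := by
        rw [Finset.sum_congr rfl (fun j _ => by
          push_cast [Nat.cast_sub (by omega : k ≤ n)]; ring :
            ∀ j ∈ Finset.range k, ((n - k + j : ℕ):ℝ) = ((n:ℝ) - k) + j)]
        rw [Finset.sum_add_distrib, Finset.sum_const, Finset.card_range, nsmul_eq_mul]
      have hgauss : (∑ j ∈ Finset.range k, (j:ℝ)) * 2 = (k:ℝ)^2 - k := by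
        have h := Finset.sum_range_id_mul_two k
        have : ((∑ j ∈ Finset.range k, j) * 2 : ℕ) = ((k * (k-1) : ℕ)) := h
        have h2 : (((∑ j ∈ Finset.range k, j) * 2 : ℕ) : ℝ) = (((k * (k-1) : ℕ)) : ℝ) := by
          exact_mod_cast this
        push_cast [Nat.cast_sub hk] at h2
        rw [h2]; ring
      have hD : ((Dnk k n : ℕ) : ℝ) = k * (2*(n:ℝ) - k) := Dnk_cast (by omega)
      have hm1 := (mnk_cast_bounds k n).1
      have hm2 := (mnk_cast_bounds k n).2
      rw [hD] at hm1 hm2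
      rw [Real.norm_eq_abs, abs_mul]
      apply mul_le_mul_of_nonneg_right _ (abs_nonneg _)
      rw [abs_le]
      constructor
      · rw [hsum]; nlinarith
      · rw [hsum]; nlinarith
    · have := ((hlog1D hk).abs).const_mul ((k:ℝ)+2)
      simpa using this
  -- combine
  have H := (((((t1.add t2).add t3).sub t4).sub t5).add t6)
  have hlim : ((((((0:ℝ) + 0) + (1/2 * Real.log k)) - 0) - 0) + 0) = Real.log k / 2 := by ring
  rw [hlim] at H
  -- now transfer via eventual equality
  apply H.congr'
  filter_upwards [eventually_ge_atTop (k+1)] with n hn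
  have hnk : k ≤ n := by omega
  have hmge : 1 ≤ mnk k n := by
    have := Dnk_ge hk hnk
    unfold mnk; omega
  have ha0 : ((mnk k n : ℕ):ℝ) ≠ 0 := by
    have : (0:ℝ) < ((mnk k n : ℕ):ℝ) := by exact_mod_cast hmge
    exact this.ne'
  have hN0 : ((n:ℕ):ℝ) ≠ 0 := by
    have : (0:ℝ) < (n:ℝ) := by exact_mod_cast (by omega : 0 < n)
    exact this.ne'
  have hDr0 : ((Dnk k n : ℕ):ℝ) ≠ 0 := (Dnk_cast_pos hk hn).ne'
  have hb0 : ∀ j ∈ Finset.range k, ((n - k + j : ℕ):ℝ) ≠ 0 := by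
    intro j _
    have : (0:ℝ) < ((n - k + j : ℕ):ℝ) := by exact_mod_cast (by omega : 0 < n - k + j)
    exact this.ne'
  have hsumSF : ∑ j ∈ Finset.range k, Real.log (Nat.factorial (n - k + j))
      = ∑ j ∈ Finset.range k, (((n - k + j : ℕ):ℝ) * Real.log ((n - k + j : ℕ):ℝ)
        - ((n - k + j : ℕ):ℝ) + (1/2) * Real.log (2*((n - k + j : ℕ):ℝ))
        + Real.log (Stirling.stirlingSeq (n - k + j))) :=
    Finset.sum_congr rfl fun j _ => SF (by omega)
  have e0 : ((Real.log (Stirling.stirlingSeq (mnk k n)) + (1/2) * Real.log (2*((mnk k n : ℕ):ℝ)))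
        / ((mnk k n : ℕ):ℝ)) * (((mnk k n : ℕ):ℝ) / ((Dnk k n : ℕ):ℝ))
      = (Real.log (Stirling.stirlingSeq (mnk k n)) + (1/2) * Real.log (2*((mnk k n : ℕ):ℝ)))
        / ((Dnk k n : ℕ):ℝ) := hqb _ _ _ ha0
  have e1 : ∑ j ∈ Finset.range k,
      ((Real.log (Stirling.stirlingSeq (n - k + j)) + (1/2) * Real.log (2*((n - k + j : ℕ):ℝ)))
        / ((n - k + j : ℕ):ℝ)) * (((n - k + j : ℕ):ℝ) / ((Dnk k n : ℕ):ℝ))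
      = ∑ j ∈ Finset.range k,
        (Real.log (Stirling.stirlingSeq (n - k + j)) + (1/2) * Real.log (2*((n - k + j : ℕ):ℝ)))
          / ((Dnk k n : ℕ):ℝ) := by
    exact Finset.sum_congr rfl fun j hj => hqb _ _ _ (hb0 j hj)
  have e2 : ∑ j ∈ Finset.range k,
      (((n - k + j : ℕ):ℝ) / ((Dnk k n : ℕ):ℝ)) * Real.log (((n - k + j : ℕ):ℝ) / (n:ℝ))
      = ∑ j ∈ Finset.range k,
        (((n - k + j : ℕ):ℝ) * Real.log ((n - k + j : ℕ):ℝ)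
          - ((n - k + j : ℕ):ℝ) * Real.log (n:ℝ)) / ((Dnk k n : ℕ):ℝ) := by
    refine Finset.sum_congr rfl fun j hj => ?_
    rw [Real.log_div (hb0 j hj) hN0]
    ring
  rw [e0, e1, e2, Real.log_div ha0 hN0, SF hmge, hsumSF]
  rw [← Finset.sum_div, ← Finset.sum_div]
  rw [Finset.sum_sub_distrib]
  rw [← Finset.sum_mul]
  simp only [Finset.sum_add_distrib, Finset.sum_sub_distrib]
  field_simp
  ring

lemma log_succ_div_D {k : ℕ} (hk : 1 ≤ k) :
    Tendsto (fun n : ℕ => Real.log (((mnk k n : ℕ):ℝ) + 1) / ((Dnk k n : ℕ):ℝ))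
      atTop (nhds 0) := by
  have hm1 : Tendsto (fun n : ℕ => ((mnk k n : ℕ):ℝ) + 1) atTop atTop :=
    tendsto_atTop_add_const_right _ 1 (tendsto_mnk hk)
  have hm1D : Tendsto (fun n : ℕ => (((mnk k n : ℕ):ℝ) + 1) / ((Dnk k n : ℕ):ℝ))
      atTop (nhds (1/2)) := by
    have h2 : Tendsto (fun n : ℕ => 1 / ((Dnk k n : ℕ):ℝ)) atTop (nhds 0) := by
      simpa [one_div, Pi.inv_def] using (tendsto_Dnk hk).inv_tendsto_atTop
    have := (hmD hk).add h2
    rw [add_zero] at this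
    exact this.congr fun n => (add_div _ _ _).symm
  have h := (log_div_self_tendsto.comp hm1).mul hm1D
  rw [zero_mul] at h
  apply h.congr'
  filter_upwards [eventually_ge_atTop (k+1)] with n hn
  have hD0 : ((Dnk k n : ℕ):ℝ) ≠ 0 := (Dnk_cast_pos hk hn).ne'
  have hm0 : ((mnk k n : ℕ):ℝ) + 1 ≠ 0 := by positivity
  simp only [Function.comp]
  field_simp

lemma core_upper {k : ℕ} (hk : 1 ≤ k) :
    Tendsto (fun n : ℕ =>
      ((k:ℝ) * Real.log (2 * Real.sqrt π) + Real.log (Nat.factorial (mnk k n + 1))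
        - ∑ j ∈ Finset.range k, Real.log (Nat.factorial (n - k + j))) / ((Dnk k n : ℕ):ℝ))
      atTop (nhds (Real.log k / 2)) := by
  have h := (core hk).add (log_succ_div_D hk)
  rw [add_zero] at h
  apply h.congr'
  filter_upwards [eventually_ge_atTop (k+1)] with n hn
  have hfac : (Nat.factorial (mnk k n + 1) : ℝ) = (((mnk k n : ℕ):ℝ) + 1) * (Nat.factorial (mnk k n) : ℝ) := by
    rw [Nat.factorial_succ]; push_cast; ring
  have hm0 : ((mnk k n : ℕ):ℝ) + 1 ≠ 0 := by positivity
  have hf0 : (Nat.factorial (mnk k n) : ℝ) ≠ 0 := by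
    exact_mod_cast (Nat.factorial_pos _).ne'
  rw [hfac, Real.log_mul hm0 hf0]
  ring

/-- Asymptotics of the Stiefel volume-to-ball ratio: with `D_{n,k} = k(2n−k)`,
`[(2√π)^k · Γ(D_{n,k}/2 + 1) / ∏_{i=n−k+1}^{n} Γ(i)]^{1/D_{n,k}} → √k` as `n → ∞`. -/
theorem stiefel_volume_ratio_limit (k : ℕ) (hk : 1 ≤ k) :
    Tendsto
      (fun n : ℕ =>
        ((2 * Real.sqrt π) ^ k *
            Real.Gamma (((k * (2 * n - k) : ℕ) : ℝ) / 2 + 1) /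
          ∏ i ∈ Finset.Icc (n - k + 1) n, Real.Gamma (i : ℝ)) ^
          (1 / ((k * (2 * n - k) : ℕ) : ℝ)))
      atTop (nhds (Real.sqrt k)) := by
  have hDnk : ∀ n : ℕ, k * (2 * n - k) = Dnk k n := fun _ => rfl
  simp only [hDnk]
  -- the squeezed middle sequence
  set α : ℕ → ℝ := fun n =>
    ((k:ℝ) * Real.log (2 * Real.sqrt π)
      + Real.log (Real.Gamma (((Dnk k n : ℕ):ℝ) / 2 + 1))
      - ∑ j ∈ Finset.range k, Real.log (Nat.factorial (n - k + j))) / ((Dnk k n : ℕ):ℝ)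
    with hα_def
  have hα : Tendsto α atTop (nhds (Real.log k / 2)) := by
    apply tendsto_of_tendsto_of_tendsto_of_le_of_le' (core hk) (core_upper hk)
    · filter_upwards [eventually_ge_atTop (k+1)] with n hn
      have hD := Dnk_cast_pos hk hn
      have hmge : 1 ≤ mnk k n := by
        have := Dnk_ge (n := n) hk (by omega); unfold mnk; omega
      have hm1 : (1:ℝ) ≤ ((mnk k n : ℕ):ℝ) := by exact_mod_cast hmge
      have hb := mnk_cast_bounds k n
      have hmem1 : ((mnk k n : ℕ):ℝ) + 1 ∈ Set.Ici (2:ℝ) := by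
        simp only [Set.mem_Ici]; linarith
      have hmem2 : ((Dnk k n : ℕ):ℝ) / 2 + 1 ∈ Set.Ici (2:ℝ) := by
        simp only [Set.mem_Ici]; nlinarith [hb.1]
      have hle : ((mnk k n : ℕ):ℝ) + 1 ≤ ((Dnk k n : ℕ):ℝ) / 2 + 1 := by linarith [hb.1]
      have hΓ := Real.Gamma_strictMonoOn_Ici.monotoneOn hmem1 hmem2 hle
      rw [Real.Gamma_nat_eq_factorial] at hΓ
      have hfpos : (0:ℝ) < (Nat.factorial (mnk k n) : ℝ) := by
        exact_mod_cast Nat.factorial_pos _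
      have hlog := Real.log_le_log hfpos hΓ
      have : ((k:ℝ) * Real.log (2 * Real.sqrt π) + Real.log (Nat.factorial (mnk k n))
          - ∑ j ∈ Finset.range k, Real.log (Nat.factorial (n - k + j)))
          ≤ ((k:ℝ) * Real.log (2 * Real.sqrt π)
            + Real.log (Real.Gamma (((Dnk k n : ℕ):ℝ) / 2 + 1))
            - ∑ j ∈ Finset.range k, Real.log (Nat.factorial (n - k + j))) := by linarith
      exact div_le_div_of_nonneg_right this hD.le
    · filter_upwards [eventually_ge_atTop (k+1)] with n hn
      have hD := Dnk_cast_pos hk hn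
      have hmge : 1 ≤ mnk k n := by
        have := Dnk_ge (n := n) hk (by omega); unfold mnk; omega
      have hm1 : (1:ℝ) ≤ ((mnk k n : ℕ):ℝ) := by exact_mod_cast hmge
      have hb := mnk_cast_bounds k n
      have hmem2 : ((Dnk k n : ℕ):ℝ) / 2 + 1 ∈ Set.Ici (2:ℝ) := by
        simp only [Set.mem_Ici]; nlinarith [hb.1]
      have hmem1 : ((mnk k n : ℕ):ℝ) + 2 ∈ Set.Ici (2:ℝ) := by
        simp only [Set.mem_Ici]; linarith
      have hle : ((Dnk k n : ℕ):ℝ) / 2 + 1 ≤ ((mnk k n : ℕ):ℝ) + 2 := by linarith [hb.2]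
      have hΓ := Real.Gamma_strictMonoOn_Ici.monotoneOn hmem2 hmem1 hle
      have hcast : ((mnk k n : ℕ):ℝ) + 2 = ((mnk k n + 1 : ℕ):ℝ) + 1 := by push_cast; ring
      rw [hcast, Real.Gamma_nat_eq_factorial] at hΓ
      have hΓpos : (0:ℝ) < Real.Gamma (((Dnk k n : ℕ):ℝ) / 2 + 1) := by
        apply Real.Gamma_pos_of_pos; positivity
      have hlog := Real.log_le_log hΓpos hΓ
      have : ((k:ℝ) * Real.log (2 * Real.sqrt π)
            + Real.log (Real.Gamma (((Dnk k n : ℕ):ℝ) / 2 + 1))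
            - ∑ j ∈ Finset.range k, Real.log (Nat.factorial (n - k + j)))
          ≤ ((k:ℝ) * Real.log (2 * Real.sqrt π) + Real.log (Nat.factorial (mnk k n + 1))
            - ∑ j ∈ Finset.range k, Real.log (Nat.factorial (n - k + j))) := by linarith
      exact div_le_div_of_nonneg_right this hD.le
  -- convert exp ∘ α to the target
  have hexp := (Real.continuous_exp.tendsto _).comp hα
  have hsqrt : Real.exp (Real.log k / 2) = Real.sqrt k := by
    have hkpos : (0:ℝ) < k := by exact_mod_cast hk
    rw [Real.sqrt_eq_rpow, Real.rpow_def_of_pos hkpos]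
    ring_nf
  rw [hsqrt] at hexp
  apply hexp.congr'
  filter_upwards [eventually_ge_atTop (k+1)] with n hn
  have hD := Dnk_cast_pos hk hn
  have hΓpos : (0:ℝ) < Real.Gamma (((Dnk k n : ℕ):ℝ) / 2 + 1) := by
    apply Real.Gamma_pos_of_pos; positivity
  have hprod : ∏ i ∈ Finset.Icc (n - k + 1) n, Real.Gamma (i : ℝ)
      = ∏ j ∈ Finset.range k, (Nat.factorial (n - k + j) : ℝ) := by
    rw [← Finset.Ico_add_one_right_eq_Icc, Finset.prod_Ico_eq_prod_range]
    have hcard : n + 1 - (n - k + 1) = k := by omega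
    rw [hcard]
    refine Finset.prod_congr rfl fun j hj => ?_
    have harg : n - k + 1 + j = (n - k + j) + 1 := by omega
    rw [harg]
    have : (((n - k + j) + 1 : ℕ) : ℝ) = ((n - k + j : ℕ):ℝ) + 1 := by push_cast; ring
    rw [this, Real.Gamma_nat_eq_factorial]
  have hprodpos : (0:ℝ) < ∏ j ∈ Finset.range k, (Nat.factorial (n - k + j) : ℝ) :=
    Finset.prod_pos fun j _ => by exact_mod_cast Nat.factorial_pos _
  have hratio_pos : (0:ℝ) <
      (2 * Real.sqrt π) ^ k * Real.Gamma (((Dnk k n : ℕ):ℝ) / 2 + 1) /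
        ∏ i ∈ Finset.Icc (n - k + 1) n, Real.Gamma (i : ℝ) := by
    rw [hprod]
    have h2 : (0:ℝ) < (2 * Real.sqrt π) ^ k := by positivity
    positivity
  rw [Function.comp_apply, Real.rpow_def_of_pos hratio_pos]
  congr 1
  rw [hprod, Real.log_div (by positivity) hprodpos.ne', Real.log_mul (by positivity) hΓpos.ne',
    Real.log_pow, Real.log_prod (fun j _ => by exact_mod_cast (Nat.factorial_pos _).ne')]

  simp only [hα_def]
  rw [mul_one_div]
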